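/- In every scheduling game on exactly 2 machines (with arbitrary weights, delays, and priority lists), a pure Nash equilibrium exists. -/

import Mathlib

def schedCost {n m : ℕ} (w : Fin n → ℝ) (c : Fin m → ℝ) (π : Fin m → Fin n → Fin n)
    (s : Fin n → Fin m) (i : Fin n) : ℝ :=
  c (s i) * ∑ i' ∈ Finset.univ.filter (fun i' => s i' = s i ∧ π (s i) i' ≤ π (s i) i), w i'

def schedNE {n m : ℕ} (w : Fin n → ℝ) (c : Fin m → ℝ) (π : Fin m → Fin n → Fin n)
    (s : Fin n → Fin m) : Prop :=
  ∀ i j, schedCost w c π s i ≤ schedCost w c π (Function.update s i j) i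

noncomputable def makespan {n m : ℕ} (w : Fin n → ℝ) (c : Fin m → ℝ) (π : Fin m → Fin n → Fin n)
    (s : Fin n → Fin m) : ℝ :=
  ⨆ i, schedCost w c π s i

open Finset

open Classical in
/-- The set of jobs assigned to the slow machine `a`, built by scanning jobs in
`pa`-priority order.  A job `x` (at rank `k = pa x`) joins iff it strictly prefers
machine `a` (cost `ca * (w x + current a-load)`) over machine `b`
(cost `cb * (w x + weight of jobs not yet on `a`, ahead of `x` in `pb`-order)`). -/
noncomputable def schedAset {n : ℕ} (w : Fin n → ℝ) (ca cb : ℝ) (pa pb : Fin n → Fin n) :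
    ℕ → Finset (Fin n)
  | 0 => ∅
  | (k+1) => schedAset w ca cb pa pb k ∪ Finset.univ.filter (fun x =>
      (pa x).val = k ∧
      ca * (w x + ∑ z ∈ schedAset w ca cb pa pb k, w z)
        < cb * (w x + ∑ z ∈ Finset.univ.filter
            (fun z => z ≠ x ∧ pb z < pb x ∧ z ∉ schedAset w ca cb pa pb k), w z))

section lemmas

variable {n : ℕ} (w : Fin n → ℝ) (ca cb : ℝ) (pa pb : Fin n → Fin n)

lemma schedAset_mono {k m : ℕ} (h : k ≤ m) :
    schedAset w ca cb pa pb k ⊆ schedAset w ca cb pa pb m := by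
  induction m with
  | zero =>
      have : k = 0 := by omega
      subst this; exact Finset.Subset.refl _
  | succ m ih =>
      rcases Nat.lt_or_ge k (m+1) with h'|h'
      · exact (ih (by omega)).trans (by rw [schedAset]; exact Finset.subset_union_left)
      · have : k = m + 1 := by omega
        subst this; exact Finset.Subset.refl _

lemma schedAset_rank_lt {k : ℕ} {x : Fin n} (hx : x ∈ schedAset w ca cb pa pb k) :
    (pa x).val < k := by
  induction k with
  | zero => simp [schedAset] at hx
  | succ k ih =>
      rw [schedAset, Finset.mem_union] at hx
      rcases hx with hx | hx
      · exact Nat.lt_succ_of_lt (ih hx)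
      · rw [Finset.mem_filter] at hx
        omega

lemma schedAset_stable {k m : ℕ} (h : k ≤ m) :
    schedAset w ca cb pa pb k
      = (schedAset w ca cb pa pb m).filter (fun z => (pa z).val < k) := by
  induction m, h using Nat.le_induction with
  | base =>
      ext z
      simp only [Finset.mem_filter, iff_self_and]
      exact fun hz => schedAset_rank_lt w ca cb pa pb hz
  | succ m hkm ih =>
      rw [ih]
      ext z
      simp only [Finset.mem_filter]
      constructor
      · rintro ⟨hz, hr⟩
        exact ⟨schedAset_mono w ca cb pa pb (Nat.le_succ m) hz, hr⟩
      · rintro ⟨hz, hr⟩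
        refine ⟨?_, hr⟩
        rw [schedAset, Finset.mem_union] at hz
        rcases hz with hz | hz
        · exact hz
        · rw [Finset.mem_filter] at hz
          omega

open Classical in
lemma schedAset_mem_iff (x : Fin n) :
    x ∈ schedAset w ca cb pa pb n ↔
      ca * (w x + ∑ z ∈ schedAset w ca cb pa pb (pa x).val, w z)
        < cb * (w x + ∑ z ∈ Finset.univ.filter
            (fun z => z ≠ x ∧ pb z < pb x ∧ z ∉ schedAset w ca cb pa pb (pa x).val), w z) := by
  have hlt : (pa x).val < n := (pa x).isLt
  have h1 : x ∈ schedAset w ca cb pa pb n ↔ x ∈ schedAset w ca cb pa pb ((pa x).val + 1) := by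
    rw [schedAset_stable w ca cb pa pb (show (pa x).val + 1 ≤ n from hlt)]
    simp [Nat.lt_succ_self]
  rw [h1, schedAset, Finset.mem_union]
  constructor
  · rintro (hx | hx)
    · exact absurd (schedAset_rank_lt w ca cb pa pb hx) (lt_irrefl _)
    · rw [Finset.mem_filter] at hx
      exact hx.2.2
  · intro h
    right
    rw [Finset.mem_filter]
    exact ⟨Finset.mem_univ x, rfl, h⟩

end lemmas

lemma schedCost_formula {n : ℕ} (w : Fin n → ℝ) (c : Fin 2 → ℝ) (π : Fin 2 → Fin n → Fin n)
    (hπ : ∀ j, Function.Bijective (π j)) (s : Fin n → Fin 2) (i : Fin n) (j : Fin 2)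
    (hij : s i = j) :
    schedCost w c π s i
      = c j * (w i + ∑ z ∈ Finset.univ.filter (fun z => z ≠ i ∧ s z = j ∧ π j z < π j i), w z) := by
  subst hij
  unfold schedCost
  congr 1
  have hset : Finset.univ.filter (fun i' => s i' = s i ∧ π (s i) i' ≤ π (s i) i)
      = insert i (Finset.univ.filter (fun z => z ≠ i ∧ s z = s i ∧ π (s i) z < π (s i) i)) := by
    ext z
    simp only [Finset.mem_filter, Finset.mem_insert, Finset.mem_univ, true_and]
    constructor
    · rintro ⟨h1, h2⟩
      rcases eq_or_ne z i with rfl | hne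
      · exact Or.inl rfl
      · refine Or.inr ⟨hne, h1, lt_of_le_of_ne h2 ?_⟩
        exact fun he => hne ((hπ (s i)).injective he)
    · rintro (rfl | ⟨hne, h1, h2⟩)
      · exact ⟨rfl, le_refl _⟩
      · exact ⟨h1, le_of_lt h2⟩
  rw [hset, Finset.sum_insert (by simp)]

/-- Every scheduling game on exactly two machines has a pure Nash equilibrium. -/
theorem stmt2 {n : ℕ} (w : Fin n → ℝ) (hw : ∀ i, 0 < w i)
    (c : Fin 2 → ℝ) (hc : ∀ j, 0 < c j)
    (π : Fin 2 → Fin n → Fin n) (hπ : ∀ j, Function.Bijective (π j)) :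
    ∃ s : Fin n → Fin 2, schedNE w c π s := by
  classical
  -- main construction, for machines a (slow) and b (fast)
  have main : ∀ a b : Fin 2, a ≠ b → c b ≤ c a → ∃ s : Fin n → Fin 2, schedNE w c π s := by
    intro a b hab hba
    set pa := π a with hpa
    set pb := π b with hpb
    set A : Finset (Fin n) := schedAset w (c a) (c b) pa pb n with hA
    set s : Fin n → Fin 2 := fun z => if z ∈ A then a else b with hs
    have hsa : ∀ z, s z = a ↔ z ∈ A := by
      intro z
      by_cases hz : z ∈ A <;> simp [hs, hz, hab.symm, Ne.symm hab]
    have hsb : ∀ z, s z = b ↔ z ∉ A := by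
      intro z
      by_cases hz : z ∈ A <;> simp [hs, hz, hab, hab.symm]
    refine ⟨s, ?_⟩
    intro i j
    -- rewrite both costs into normal form
    rcases eq_or_ne j (s i) with rfl | hj
    · rw [Function.update_eq_self]
    -- j ≠ s i
    have hupdate : schedCost w c π (Function.update s i j) i
        = c j * (w i + ∑ z ∈ Finset.univ.filter
            (fun z => z ≠ i ∧ s z = j ∧ π j z < π j i), w z) := by
      rw [schedCost_formula w c π hπ (Function.update s i j) i j (Function.update_self i j s)]
      congr 2
      apply Finset.sum_congr
      · apply Finset.filter_congr
        intro z _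
        constructor
        · rintro ⟨hzi, h1, h2⟩
          rw [Function.update_of_ne hzi] at h1
          exact ⟨hzi, h1, h2⟩
        · rintro ⟨hzi, h1, h2⟩
          rw [Function.update_of_ne hzi]
          exact ⟨hzi, h1, h2⟩
      · intros; rfl
    -- abbreviations
    have hwnn : ∀ z : Fin n, 0 ≤ w z := fun z => (hw z).le
    -- the two key inequalities
    -- notation: for x, TxSet = jobs on a ahead of x in pa-order; SxSet similarly on b.
    have key : ∀ x : Fin n,
        (x ∈ A →
          c a * (w x + ∑ z ∈ Finset.univ.filter (fun z => z ≠ x ∧ s z = a ∧ pa z < pa x), w z)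
            ≤ c b * (w x + ∑ z ∈ Finset.univ.filter (fun z => z ≠ x ∧ s z = b ∧ pb z < pb x), w z))
        ∧ (x ∉ A →
          c b * (w x + ∑ z ∈ Finset.univ.filter (fun z => z ≠ x ∧ s z = b ∧ pb z < pb x), w z)
            ≤ c a * (w x + ∑ z ∈ Finset.univ.filter (fun z => z ≠ x ∧ s z = a ∧ pa z < pa x), w z)) := by
      intro x
      -- identify TxSet with schedAset at rank of x
      have hTx : Finset.univ.filter (fun z => z ≠ x ∧ s z = a ∧ pa z < pa x)
          = schedAset w (c a) (c b) pa pb (pa x).val := by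
        rw [schedAset_stable w (c a) (c b) pa pb (show (pa x).val ≤ n from (pa x).isLt.le)]
        ext z
        simp only [Finset.mem_filter, Finset.mem_univ, true_and]
        constructor
        · rintro ⟨hzx, hza, hlt⟩
          exact ⟨(hsa z).1 hza, hlt⟩
        · rintro ⟨hzA, hlt⟩
          have hzx : z ≠ x := by
            intro h; subst h; exact absurd hlt (lt_irrefl _)
          exact ⟨hzx, (hsa z).2 hzA, hlt⟩
      have hSx : Finset.univ.filter (fun z => z ≠ x ∧ s z = b ∧ pb z < pb x)
          = Finset.univ.filter (fun z => z ≠ x ∧ pb z < pb x ∧ z ∉ A) := by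
        ext z
        simp only [Finset.mem_filter, Finset.mem_univ, true_and]
        constructor
        · rintro ⟨hzx, hzb, hlt⟩; exact ⟨hzx, hlt, (hsb z).1 hzb⟩
        · rintro ⟨hzx, hlt, hzA⟩; exact ⟨hzx, (hsb z).2 hzA, hlt⟩
      have hdec := schedAset_mem_iff w (c a) (c b) pa pb x
      constructor
      · -- x ∈ A : happy on a
        intro hxA
        have hdx := (schedAset_mem_iff w (c a) (c b) pa pb x).1 hxA
        rw [hTx, hSx]
        set D : Finset (Fin n) := A.filter (fun z => pa x < pa z ∧ pb z < pb x) with hD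
        by_cases hDe : D = ∅
        · -- no later movers ahead of x on b: the decision sum equals the final sum
          have hsub : Finset.univ.filter
                (fun z => z ≠ x ∧ pb z < pb x ∧ z ∉ schedAset w (c a) (c b) pa pb (pa x).val)
              ⊆ Finset.univ.filter (fun z => z ≠ x ∧ pb z < pb x ∧ z ∉ A) := by
            intro z hz
            rw [Finset.mem_filter] at hz ⊢
            obtain ⟨_, hzx, hlt, hzk⟩ := hz
            refine ⟨Finset.mem_univ z, hzx, hlt, ?_⟩
            intro hzA
            have hrank : (pa x).val ≤ (pa z).val := by
              by_contra hr
              push_neg at hr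
              apply hzk
              rw [schedAset_stable w (c a) (c b) pa pb (show (pa x).val ≤ n from (pa x).isLt.le)]
              exact Finset.mem_filter.2 ⟨hzA, hr⟩
            have hrank' : pa x < pa z := by
              rcases lt_or_eq_of_le hrank with h | h
              · exact h
              · exfalso; exact hzx ((hπ a).injective (Fin.val_injective h).symm)
            have : z ∈ D := Finset.mem_filter.2 ⟨hzA, hrank', hlt⟩
            rw [hDe] at this
            exact absurd this (Finset.notMem_empty z)
          calc c a * (w x + ∑ z ∈ schedAset w (c a) (c b) pa pb (pa x).val, w z)
              ≤ c b * (w x + ∑ z ∈ Finset.univ.filter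
                  (fun z => z ≠ x ∧ pb z < pb x ∧ z ∉ schedAset w (c a) (c b) pa pb (pa x).val), w z) :=
                hdx.le
            _ ≤ c b * (w x + ∑ z ∈ Finset.univ.filter (fun z => z ≠ x ∧ pb z < pb x ∧ z ∉ A), w z) := by
                apply mul_le_mul_of_nonneg_left _ (hc b).le
                apply add_le_add_right
                exact Finset.sum_le_sum_of_subset_of_nonneg hsub (fun z _ _ => hwnn z)
        · -- there is a later mover ahead of x on b; take the pa-maximal one, y
          obtain ⟨y, hyD, hymax⟩ := Finset.exists_max_image D (fun z => pa z)
            (Finset.nonempty_of_ne_empty hDe)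
          rw [hD, Finset.mem_filter] at hyD
          obtain ⟨hyA, hxy, hyb⟩ := hyD
          have hdy := (schedAset_mem_iff w (c a) (c b) pa pb y).1 hyA
          -- (i) decision sum for y is ≤ final b-sum for x
          have hsubS : Finset.univ.filter
                (fun z => z ≠ y ∧ pb z < pb y ∧ z ∉ schedAset w (c a) (c b) pa pb (pa y).val)
              ⊆ Finset.univ.filter (fun z => z ≠ x ∧ pb z < pb x ∧ z ∉ A) := by
            intro z hz
            rw [Finset.mem_filter] at hz ⊢
            obtain ⟨_, hzy, hlt, hzk⟩ := hz
            have hxk : x ∈ schedAset w (c a) (c b) pa pb (pa y).val := by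
              rw [schedAset_stable w (c a) (c b) pa pb (show (pa y).val ≤ n from (pa y).isLt.le)]
              exact Finset.mem_filter.2 ⟨hxA, hxy⟩
            have hzx : z ≠ x := fun h => hzk (h ▸ hxk)
            have hltx : pb z < pb x := hlt.trans hyb
            refine ⟨Finset.mem_univ z, hzx, hltx, ?_⟩
            intro hzA
            have hrank : (pa y).val ≤ (pa z).val := by
              by_contra hr
              push_neg at hr
              apply hzk
              rw [schedAset_stable w (c a) (c b) pa pb (show (pa y).val ≤ n from (pa y).isLt.le)]
              exact Finset.mem_filter.2 ⟨hzA, hr⟩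
            have hyz : pa y < pa z := by
              rcases lt_or_eq_of_le hrank with h | h
              · exact h
              · exfalso; exact hzy ((hπ a).injective (Fin.val_injective h).symm)
            have hzD : z ∈ D := Finset.mem_filter.2 ⟨hzA, hxy.trans hyz, hltx⟩
            exact absurd (hymax z hzD) (not_le.2 hyz)
          -- (ii) a-load at y's decision contains x and the a-load at x's decision
          have hsubT : insert x (schedAset w (c a) (c b) pa pb (pa x).val)
              ⊆ schedAset w (c a) (c b) pa pb (pa y).val := by
            intro z hz
            rw [Finset.mem_insert] at hz
            rw [schedAset_stable w (c a) (c b) pa pb (show (pa y).val ≤ n from (pa y).isLt.le)]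
            rcases hz with rfl | hz
            · exact Finset.mem_filter.2 ⟨hxA, hxy⟩
            · rw [schedAset_stable w (c a) (c b) pa pb
                (show (pa x).val ≤ n from (pa x).isLt.le)] at hz
              rw [Finset.mem_filter] at hz
              exact Finset.mem_filter.2 ⟨hz.1, hz.2.trans hxy⟩
          have hxnot : x ∉ schedAset w (c a) (c b) pa pb (pa x).val := by
            intro h
            exact absurd (schedAset_rank_lt w (c a) (c b) pa pb h) (lt_irrefl _)
          have hTle : w x + ∑ z ∈ schedAset w (c a) (c b) pa pb (pa x).val, w z
              ≤ ∑ z ∈ schedAset w (c a) (c b) pa pb (pa y).val, w z := by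
            rw [← Finset.sum_insert hxnot]
            exact Finset.sum_le_sum_of_subset_of_nonneg hsubT (fun z _ _ => hwnn z)
          -- from y's decision: c a * (a-load at y) < c b * (b-sum at y)
          have hstep : c a * (∑ z ∈ schedAset w (c a) (c b) pa pb (pa y).val, w z)
              ≤ c b * (∑ z ∈ Finset.univ.filter
                (fun z => z ≠ y ∧ pb z < pb y ∧ z ∉ schedAset w (c a) (c b) pa pb (pa y).val), w z) := by
            nlinarith [hw y, hc a, hc b]
          calc c a * (w x + ∑ z ∈ schedAset w (c a) (c b) pa pb (pa x).val, w z)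
              ≤ c a * (∑ z ∈ schedAset w (c a) (c b) pa pb (pa y).val, w z) :=
                mul_le_mul_of_nonneg_left hTle (hc a).le
            _ ≤ c b * (∑ z ∈ Finset.univ.filter
                (fun z => z ≠ y ∧ pb z < pb y ∧ z ∉ schedAset w (c a) (c b) pa pb (pa y).val), w z) :=
                hstep
            _ ≤ c b * (∑ z ∈ Finset.univ.filter (fun z => z ≠ x ∧ pb z < pb x ∧ z ∉ A), w z) :=
                mul_le_mul_of_nonneg_left
                  (Finset.sum_le_sum_of_subset_of_nonneg hsubS (fun z _ _ => hwnn z)) (hc b).le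
            _ ≤ c b * (w x + ∑ z ∈ Finset.univ.filter (fun z => z ≠ x ∧ pb z < pb x ∧ z ∉ A), w z) := by
                nlinarith [hw x, hc b]
      · -- x ∉ A : happy on b
        intro hxA
        have hdx : ¬ (c a * (w x + ∑ z ∈ schedAset w (c a) (c b) pa pb (pa x).val, w z)
            < c b * (w x + ∑ z ∈ Finset.univ.filter
              (fun z => z ≠ x ∧ pb z < pb x ∧ z ∉ schedAset w (c a) (c b) pa pb (pa x).val), w z)) :=
          fun h => hxA ((schedAset_mem_iff w (c a) (c b) pa pb x).2 h)
        push_neg at hdx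
        rw [hTx, hSx]
        have hsub : Finset.univ.filter (fun z => z ≠ x ∧ pb z < pb x ∧ z ∉ A)
            ⊆ Finset.univ.filter
              (fun z => z ≠ x ∧ pb z < pb x ∧ z ∉ schedAset w (c a) (c b) pa pb (pa x).val) := by
          intro z hz
          rw [Finset.mem_filter] at hz ⊢
          obtain ⟨_, hzx, hlt, hzA⟩ := hz
          refine ⟨Finset.mem_univ z, hzx, hlt, ?_⟩
          intro hzk
          exact hzA (schedAset_mono w (c a) (c b) pa pb (show (pa x).val ≤ n from (pa x).isLt.le) hzk)
        calc c b * (w x + ∑ z ∈ Finset.univ.filter (fun z => z ≠ x ∧ pb z < pb x ∧ z ∉ A), w z)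
            ≤ c b * (w x + ∑ z ∈ Finset.univ.filter
                (fun z => z ≠ x ∧ pb z < pb x ∧ z ∉ schedAset w (c a) (c b) pa pb (pa x).val), w z) := by
              apply mul_le_mul_of_nonneg_left _ (hc b).le
              apply add_le_add_right
              exact Finset.sum_le_sum_of_subset_of_nonneg hsub (fun z _ _ => hwnn z)
          _ ≤ c a * (w x + ∑ z ∈ schedAset w (c a) (c b) pa pb (pa x).val, w z) := hdx
    -- now conclude the NE property for i and j
    have hcost : schedCost w c π s i
        = c (s i) * (w i + ∑ z ∈ Finset.univ.filter
            (fun z => z ≠ i ∧ s z = s i ∧ π (s i) z < π (s i) i), w z) :=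
      schedCost_formula w c π hπ s i (s i) rfl
    have hjab : (j = a ∧ s i = b) ∨ (j = b ∧ s i = a) := by
      have hja : j = a ∨ j = b := by
        have : ∀ u : Fin 2, u = a ∨ u = b := by
          intro u
          fin_cases a <;> fin_cases b <;> fin_cases u <;> simp_all
        exact this j
      have hsi : s i = a ∨ s i = b := by
        by_cases hi : i ∈ A
        · left; exact (hsa i).2 hi
        · right; exact (hsb i).2 hi
      rcases hja with rfl | rfl
      · rcases hsi with h | h
        · exact absurd h.symm hj
        · exact Or.inl ⟨rfl, h⟩
      · rcases hsi with h | h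
        · exact Or.inr ⟨rfl, h⟩
        · exact absurd h.symm hj
    rcases hjab with ⟨rfl, hsi⟩ | ⟨rfl, hsi⟩
    · -- i on b, deviating to a
      have hiA : i ∉ A := (hsb i).1 hsi
      rw [hcost, hupdate, hsi]
      exact ((key i).2 hiA)
    · -- i on a, deviating to b
      have hiA : i ∈ A := (hsa i).1 hsi
      rw [hcost, hupdate, hsi]
      exact ((key i).1 hiA)
  rcases le_total (c 0) (c 1) with h | h
  · exact main 1 0 (by decide) h
  · exact main 0 1 (by decide) h
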